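/- Let M be an invertible real n×n matrix and let Ω and Q be real symmetric n×n matrices. Let Z be the 2n×2n block matrix Z = [[M + QM^{-ᵀ}Ω, QM^{-ᵀ}], [M^{-ᵀ}Ω, M^{-ᵀ}]] and J = [[0, I_n], [−I_n, 0]]. Then Z is symplectic: Z is invertible with Z⁻¹ = −JZᵀJ (equivalently ZJZᵀ = J). -/

import Mathlib

open Matrix

/-- The one-step transition matrix of the linear representation of the Kalman
filter Riccati recurrence,
`Z = [[M + Q M⁻ᵀ Ω, Q M⁻ᵀ], [M⁻ᵀ Ω, M⁻ᵀ]]`, is symplectic: it is invertible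
with `Z⁻¹ = -J Zᵀ J`, where `J = [[0, I], [-I, 0]]`. -/
theorem kf_transition_is_symplectic {n : ℕ}
    (M Ω Q : Matrix (Fin n) (Fin n) ℝ) (hM : IsUnit M)
    (hΩ : Ωᵀ = Ω) (hQ : Qᵀ = Q) :
    IsUnit (Matrix.fromBlocks (M + Q * (M⁻¹)ᵀ * Ω) (Q * (M⁻¹)ᵀ) ((M⁻¹)ᵀ * Ω) ((M⁻¹)ᵀ)) ∧
    (Matrix.fromBlocks (M + Q * (M⁻¹)ᵀ * Ω) (Q * (M⁻¹)ᵀ) ((M⁻¹)ᵀ * Ω) ((M⁻¹)ᵀ))⁻¹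
      = -(Matrix.fromBlocks (0 : Matrix (Fin n) (Fin n) ℝ) 1 (-1) 0
          * (Matrix.fromBlocks (M + Q * (M⁻¹)ᵀ * Ω) (Q * (M⁻¹)ᵀ) ((M⁻¹)ᵀ * Ω) ((M⁻¹)ᵀ))ᵀ
          * Matrix.fromBlocks (0 : Matrix (Fin n) (Fin n) ℝ) 1 (-1) 0) := by
  have hdet : IsUnit M.det := (Matrix.isUnit_iff_isUnit_det M).mp hM
  have hMM : M * M⁻¹ = 1 := Matrix.mul_nonsing_inv M hdet
  have hMMT : (M⁻¹)ᵀ * Mᵀ = 1 := by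
    rw [← Matrix.transpose_mul, hMM, Matrix.transpose_one]
  -- The candidate inverse, written blockwise
  have hW : -(Matrix.fromBlocks (0 : Matrix (Fin n) (Fin n) ℝ) 1 (-1) 0
          * (Matrix.fromBlocks (M + Q * (M⁻¹)ᵀ * Ω) (Q * (M⁻¹)ᵀ) ((M⁻¹)ᵀ * Ω) ((M⁻¹)ᵀ))ᵀ
          * Matrix.fromBlocks (0 : Matrix (Fin n) (Fin n) ℝ) 1 (-1) 0)
      = Matrix.fromBlocks (M⁻¹) (-(M⁻¹ * Q)) (-(Ω * M⁻¹)) (Mᵀ + Ω * M⁻¹ * Q) := by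
    simp [Matrix.fromBlocks_transpose, Matrix.fromBlocks_multiply, Matrix.fromBlocks_neg,
      Matrix.transpose_add, Matrix.transpose_mul, Matrix.transpose_transpose, hΩ, hQ,
      Matrix.mul_assoc]
  have e1 : (M + Q * (M⁻¹)ᵀ * Ω) * M⁻¹ + (Q * (M⁻¹)ᵀ) * (-(Ω * M⁻¹)) = 1 := by
    have h : (M + Q * (M⁻¹)ᵀ * Ω) * M⁻¹ + (Q * (M⁻¹)ᵀ) * (-(Ω * M⁻¹)) = M * M⁻¹ := by
      noncomm_ring
    rw [h, hMM]
  have e2 : (M + Q * (M⁻¹)ᵀ * Ω) * (-(M⁻¹ * Q)) + (Q * (M⁻¹)ᵀ) * (Mᵀ + Ω * M⁻¹ * Q) = 0 := by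
    have h : (M + Q * (M⁻¹)ᵀ * Ω) * (-(M⁻¹ * Q)) + (Q * (M⁻¹)ᵀ) * (Mᵀ + Ω * M⁻¹ * Q)
        = -((M * M⁻¹) * Q) + Q * ((M⁻¹)ᵀ * Mᵀ) := by
      noncomm_ring
    rw [h, hMM, hMMT]; simp
  have e3 : ((M⁻¹)ᵀ * Ω) * M⁻¹ + (M⁻¹)ᵀ * (-(Ω * M⁻¹)) = 0 := by noncomm_ring
  have e4 : ((M⁻¹)ᵀ * Ω) * (-(M⁻¹ * Q)) + (M⁻¹)ᵀ * (Mᵀ + Ω * M⁻¹ * Q) = 1 := by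
    have h : ((M⁻¹)ᵀ * Ω) * (-(M⁻¹ * Q)) + (M⁻¹)ᵀ * (Mᵀ + Ω * M⁻¹ * Q)
        = (M⁻¹)ᵀ * Mᵀ := by noncomm_ring
    rw [h, hMMT]
  have hmul : Matrix.fromBlocks (M + Q * (M⁻¹)ᵀ * Ω) (Q * (M⁻¹)ᵀ) ((M⁻¹)ᵀ * Ω) ((M⁻¹)ᵀ)
      * Matrix.fromBlocks (M⁻¹) (-(M⁻¹ * Q)) (-(Ω * M⁻¹)) (Mᵀ + Ω * M⁻¹ * Q) = 1 := by
    rw [Matrix.fromBlocks_multiply, e1, e2, e3, e4, ← Matrix.fromBlocks_one]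
  have hU : IsUnit (Matrix.fromBlocks (M + Q * (M⁻¹)ᵀ * Ω) (Q * (M⁻¹)ᵀ) ((M⁻¹)ᵀ * Ω) ((M⁻¹)ᵀ)) := by
    rw [Matrix.isUnit_iff_isUnit_det]
    exact IsUnit.of_mul_eq_one _ (by rw [← Matrix.det_mul, hmul, Matrix.det_one])
  refine ⟨hU, ?_⟩
  rw [hW]
  exact Matrix.inv_eq_right_inv hmul
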